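/- Let φ : Δ_m → ℝ₊^m be strictly proper, and suppose teacher equals true class-probability function p. For α ∈ [0,1], ε > 0, define the anchor loss L_anc(h) = E_{(x,y)}[ a(x,y)·φ(h(x)) ] where a(x,y) = α p(x) + (1−α) e_y if y = argmax_k p_k(x) (with a fixed tie-breaking rule) and a(x,y) = ε e_y otherwise. Then L_anc(h) = E_x[ p̃(x)·φ(h(x)) ] where, writing j = argmax_k p_k(x): p̃_j(x) = α p_j(x)² + (1−α) p_j(x), and p̃_s(x) = (α p_j(x) + ε) p_s(x) for s ≠ j. Consequently the minimizer over measurable h : X → Δ_m is h*(x) = p̃(x)/Σ_k p̃_k(x). -/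

import Mathlib

open MeasureTheory Finset

/-- Anchor loss with teacher equal to the true class-probability function p:
with a(x,y) = α p(x) + (1−α) e_y when y = argmax_k p_k(x) (tie-broken by j) and
a(x,y) = ε e_y otherwise, the anchor loss E_{(x,y)}[a(x,y)·φ(h(x))] equals
E_x[p̃(x)·φ(h(x))] where p̃_j = α p_j² + (1−α) p_j at the argmax coordinate j and
p̃_s = (α p_j + ε) p_s otherwise; hence for a strictly proper φ the minimizer is
h*(x) = p̃(x)/Σ_k p̃_k(x). -/
theorem stmt_9 {X : Type*} [MeasurableSpace X] {m : ℕ}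
    (D : Measure (X × Fin m)) [IsProbabilityMeasure D]
    (p : X → Fin m → ℝ) (hp : ∀ x, p x ∈ stdSimplex ℝ (Fin m))
    (hpmeas : ∀ i, Measurable fun x => p x i)
    (hcond : ∀ (i : Fin m) (s : Set X), MeasurableSet s →
      (D (s ×ˢ ({i} : Set (Fin m)))).toReal = ∫ x in s, p x i ∂(D.map Prod.fst))
    (φ : (Fin m → ℝ) → (Fin m → ℝ)) (B : ℝ)
    (hφB : ∀ z ∈ stdSimplex ℝ (Fin m), ∀ i, |φ z i| ≤ B)
    (hφpos : ∀ z ∈ stdSimplex ℝ (Fin m), ∀ i, 0 ≤ φ z i)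
    (hproper : ∀ u ∈ stdSimplex ℝ (Fin m), ∀ v ∈ stdSimplex ℝ (Fin m), v ≠ u →
      ∑ i, u i * φ u i < ∑ i, u i * φ v i)
    (α ε : ℝ) (hα : α ∈ Set.Icc (0 : ℝ) 1) (hε : 0 < ε)
    -- j x is the argmax of p x with a fixed (deterministic) tie-breaking rule
    (j : X → Fin m) (hjmeas : Measurable j) (hj : ∀ x, ∀ k, p x k ≤ p x (j x))
    -- the anchor weights a(x,y)
    (a : X × Fin m → Fin m → ℝ)
    (ha : ∀ z : X × Fin m, a z =
      if z.2 = j z.1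
        then fun i => α * p z.1 i + (1 - α) * (Pi.single z.2 (1 : ℝ) : Fin m → ℝ) i
        else fun i => ε * (Pi.single z.2 (1 : ℝ) : Fin m → ℝ) i)
    -- the reweighted distribution p̃
    (ptil : X → Fin m → ℝ)
    (hptil : ∀ x, ∀ i, ptil x i =
      if i = j x then α * p x i ^ 2 + (1 - α) * p x i
      else (α * p x (j x) + ε) * p x i)
    (hIntStar : Integrable
      (fun x => ∑ i, ptil x i * φ ((∑ k, ptil x k)⁻¹ • ptil x) i) (D.map Prod.fst)) :
    (∀ h : X → Fin m → ℝ, (∀ x, h x ∈ stdSimplex ℝ (Fin m)) →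
      (∀ i, Measurable fun x => φ (h x) i) →
      ∫ z, ∑ i, a z i * φ (h z.1) i ∂D =
        ∫ x, ∑ i, ptil x i * φ (h x) i ∂(D.map Prod.fst)) ∧
    (∀ h : X → Fin m → ℝ, (∀ x, h x ∈ stdSimplex ℝ (Fin m)) →
      (∀ i, Measurable fun x => φ (h x) i) →
      Integrable (fun x => ∑ i, ptil x i * φ (h x) i) (D.map Prod.fst) →
      (∫ x, ∑ i, ptil x i * φ ((∑ k, ptil x k)⁻¹ • ptil x) i ∂(D.map Prod.fst)) ≤
        ∫ x, ∑ i, ptil x i * φ (h x) i ∂(D.map Prod.fst)) := by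
  classical
  obtain ⟨hα0, hα1⟩ := hα
  have hfst : Measurable (Prod.fst : X × Fin m → X) := measurable_fst
  set μ := D.map Prod.fst with hμdef
  haveI hμprob : IsProbabilityMeasure μ := Measure.isProbabilityMeasure_map hfst.aemeasurable
  have hp0 : ∀ x i, 0 ≤ p x i := fun x i => (hp x).1 i
  have hp1 : ∀ x, ∑ i, p x i = 1 := fun x => (hp x).2
  have hp_le1 : ∀ x i, p x i ≤ 1 := by
    intro x i
    calc p x i ≤ ∑ k, p x k :=
          Finset.single_le_sum (fun k _ => hp0 x k) (Finset.mem_univ i)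
      _ = 1 := hp1 x
  have hpj_pos : ∀ x, 0 < p x (j x) := by
    intro x
    by_contra hcon
    push_neg at hcon
    have hsum0 : ∑ k, p x k = 0 :=
      Finset.sum_eq_zero fun k _ => le_antisymm ((hj x k).trans hcon) (hp0 x k)
    rw [hp1 x] at hsum0
    norm_num at hsum0
  -- nonnegativity of ptil and positivity of its sum
  have hptil0 : ∀ x i, 0 ≤ ptil x i := by
    intro x i
    rw [hptil x i]
    split
    · nlinarith [hp0 x i, hp_le1 x i, sq_nonneg (p x i)]
    · exact mul_nonneg (by nlinarith [hp0 x (j x)]) (hp0 x i)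
  have hsum_pos : ∀ x, 0 < ∑ k, ptil x k := by
    intro x
    have h1 : 0 < ptil x (j x) := by
      rw [hptil x (j x), if_pos rfl]
      nlinarith [mul_pos (hpj_pos x) (hpj_pos x),
        mul_nonneg (sub_nonneg.2 hα1)
          (mul_nonneg (hpj_pos x).le (sub_nonneg.2 (hp_le1 x (j x))))]
    exact lt_of_lt_of_le h1
      (Finset.single_le_sum (fun k _ => hptil0 x k) (Finset.mem_univ (j x)))
  have hstar_mem : ∀ x, (∑ k, ptil x k)⁻¹ • ptil x ∈ stdSimplex ℝ (Fin m) := by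
    intro x
    refine ⟨fun i => mul_nonneg (inv_nonneg.2 (hsum_pos x).le) (hptil0 x i), ?_⟩
    simp only [Pi.smul_apply, smul_eq_mul, ← Finset.mul_sum]
    exact inv_mul_cancel₀ (hsum_pos x).ne'
  -- the fiber measures are μ with density p · i
  have hpi_int : ∀ i, Integrable (fun x => p x i) μ := by
    intro i
    refine (integrable_const (1 : ℝ)).mono' (hpmeas i).aestronglyMeasurable
      (ae_of_all _ fun x => ?_)
    rw [Real.norm_eq_abs, abs_of_nonneg (hp0 x i)]
    exact hp_le1 x i
  have hnu : ∀ i : Fin m, (D.restrict (Set.univ ×ˢ ({i} : Set (Fin m)))).map Prod.fst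
      = μ.withDensity (fun x => ((p x i).toNNReal : ENNReal)) := by
    intro i
    ext s hs
    rw [Measure.map_apply hfst hs,
      Measure.restrict_apply (hfst hs)]
    have hset : (Prod.fst ⁻¹' s) ∩ (Set.univ ×ˢ ({i} : Set (Fin m)))
        = s ×ˢ ({i} : Set (Fin m)) := by
      ext z
      constructor
      · rintro ⟨h1, -, h2⟩; exact ⟨h1, h2⟩
      · rintro ⟨h1, h2⟩; exact ⟨h1, trivial, h2⟩
    rw [hset, withDensity_apply _ hs]
    have h1 : ∫⁻ x in s, ((p x i).toNNReal : ENNReal) ∂μ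
        = ENNReal.ofReal (∫ x in s, p x i ∂μ) := by
      rw [ofReal_integral_eq_lintegral_ofReal ((hpi_int i).restrict)
        (ae_of_all _ fun x => hp0 x i)]
      rfl
    rw [h1, ← hcond i s hs]
    exact (ENNReal.ofReal_toReal (measure_ne_top D _)).symm
  have hfiber : ∀ (i : Fin m) (g : X → ℝ), Measurable g →
      ∫ z in Set.univ ×ˢ ({i} : Set (Fin m)), g z.1 ∂D = ∫ x, p x i * g x ∂μ := by
    intro i g hg
    have h1 : ∫ z in Set.univ ×ˢ ({i} : Set (Fin m)), g z.1 ∂D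
        = ∫ y, g y ∂((D.restrict (Set.univ ×ˢ ({i} : Set (Fin m)))).map Prod.fst) :=
      (integral_map hfst.aemeasurable hg.aestronglyMeasurable).symm
    rw [h1, hnu i, integral_withDensity_eq_integral_smul ((hpmeas i).real_toNNReal) g]
    refine integral_congr_ae (ae_of_all _ fun x => ?_)
    simp [NNReal.smul_def, Real.coe_toNNReal _ (hp0 x i)]
  -- the main identity
  have main : ∀ h : X → Fin m → ℝ, (∀ x, h x ∈ stdSimplex ℝ (Fin m)) →
      (∀ i, Measurable fun x => φ (h x) i) →
      ∫ z, ∑ i, a z i * φ (h z.1) i ∂D = ∫ x, ∑ i, ptil x i * φ (h x) i ∂μ := by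
    intro h hh hhm
    have hfB : ∀ x i, |φ (h x) i| ≤ B := fun x i => hφB _ (hh x) i
    set C : ℝ := max B (ε * B) with hC
    set G : Fin m → X → ℝ := fun b x =>
      if b = j x then α * (∑ i, p x i * φ (h x) i) + (1 - α) * φ (h x) b
      else ε * φ (h x) b with hGdef
    have hS : ∀ x, |∑ i, p x i * φ (h x) i| ≤ B := by
      intro x
      calc |∑ i, p x i * φ (h x) i| ≤ ∑ i, |p x i * φ (h x) i| :=
            Finset.abs_sum_le_sum_abs _ _
        _ ≤ ∑ i, p x i * B := by
            refine Finset.sum_le_sum fun i _ => ?_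
            rw [abs_mul, abs_of_nonneg (hp0 x i)]
            exact mul_le_mul_of_nonneg_left (hfB x i) (hp0 x i)
        _ = B := by rw [← Finset.sum_mul, hp1 x, one_mul]
    have hGbd : ∀ b x, |G b x| ≤ C := by
      intro b x
      have hB0 : 0 ≤ B := (abs_nonneg _).trans (hfB x b)
      simp only [hGdef]
      split
      · calc |α * (∑ i, p x i * φ (h x) i) + (1 - α) * φ (h x) b|
            ≤ |α * (∑ i, p x i * φ (h x) i)| + |(1 - α) * φ (h x) b| := abs_add_le _ _
          _ = α * |∑ i, p x i * φ (h x) i| + (1 - α) * |φ (h x) b| := by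
              rw [abs_mul, abs_mul, abs_of_nonneg hα0, abs_of_nonneg (show (0:ℝ) ≤ 1 - α by linarith)]
          _ ≤ α * B + (1 - α) * B :=
              add_le_add (mul_le_mul_of_nonneg_left (hS x) hα0)
                (mul_le_mul_of_nonneg_left (hfB x b) (by linarith))
          _ = B := by ring
          _ ≤ C := le_max_left _ _
      · calc |ε * φ (h x) b| = ε * |φ (h x) b| := by rw [abs_mul, abs_of_nonneg hε.le]
          _ ≤ ε * B := mul_le_mul_of_nonneg_left (hfB x b) hε.le
          _ ≤ C := le_max_right _ _
    have hFform : ∀ x (b : Fin m), ∑ i, a (x, b) i * φ (h x) i = G b x := by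
      intro x b
      rw [ha (x, b)]
      simp only [hGdef]
      by_cases hb : b = j x
      · simp only [if_pos hb]
        have e : ∀ i : Fin m,
            (α * p x i + (1 - α) * (Pi.single b (1:ℝ) : Fin m → ℝ) i) * φ (h x) i
              = α * (p x i * φ (h x) i) + (1 - α) * (if i = b then φ (h x) i else 0) := by
          intro i
          rcases eq_or_ne i b with hib | hib <;> simp [Pi.single_apply, hib] <;> ring
        rw [Finset.sum_congr rfl fun i _ => e i, Finset.sum_add_distrib,
          ← Finset.mul_sum, ← Finset.mul_sum,
          Finset.sum_ite_eq' Finset.univ b (fun i => φ (h x) i)]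
        simp
      · simp only [if_neg hb]
        have e : ∀ i : Fin m, ε * (Pi.single b (1:ℝ) : Fin m → ℝ) i * φ (h x) i
            = if i = b then ε * φ (h x) i else 0 := by
          intro i; rcases eq_or_ne i b with hib | hib <;> simp [Pi.single_apply, hib]
        rw [Finset.sum_congr rfl fun i _ => e i,
          Finset.sum_ite_eq' Finset.univ b (fun i => ε * φ (h x) i)]
        simp
    have hGmeas : ∀ b, Measurable (G b) := by
      intro b
      have hset : MeasurableSet {x | b = j x} := by
        have he : {x | b = j x} = j ⁻¹' {b} := by ext x; simp [eq_comm]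
        rw [he]; exact hjmeas (measurableSet_singleton b)
      exact Measurable.ite hset
        ((measurable_const.mul
            (Finset.measurable_sum Finset.univ fun i _ => (hpmeas i).mul (hhm i))).add
          (measurable_const.mul (hhm b)))
        (measurable_const.mul (hhm b))
    have hFmeas : Measurable (fun z : X × Fin m => ∑ i, a z i * φ (h z.1) i) := by
      apply measurable_from_prod_countable_left
      intro b
      have he : (fun x => ∑ i, a (x, b) i * φ (h x) i) = G b := funext fun x => hFform x b
      rw [he]; exact hGmeas b
    have hFint : Integrable (fun z : X × Fin m => ∑ i, a z i * φ (h z.1) i) D := by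
      refine (integrable_const C).mono' hFmeas.aestronglyMeasurable
        (ae_of_all _ fun z => ?_)
      rw [Real.norm_eq_abs, hFform z.1 z.2]
      exact hGbd z.2 z.1
    have hmeasS : ∀ i : Fin m,
        MeasurableSet ((Set.univ : Set X) ×ˢ ({i} : Set (Fin m))) :=
      fun i => MeasurableSet.univ.prod (measurableSet_singleton i)
    have hunion : (⋃ i : Fin m, (Set.univ : Set X) ×ˢ ({i} : Set (Fin m))) = Set.univ := by
      ext z; simp
    have hdisj : Pairwise (Function.onFun Disjoint fun i : Fin m =>
        (Set.univ : Set X) ×ˢ ({i} : Set (Fin m))) := by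
      intro i k hik
      simp only [Function.onFun, Set.disjoint_left]
      rintro ⟨x, b⟩ ⟨-, hb1⟩ ⟨-, hb2⟩
      simp only [Set.mem_singleton_iff] at hb1 hb2
      exact hik (hb1 ▸ hb2 ▸ rfl)
    have step1 : ∫ z, ∑ i, a z i * φ (h z.1) i ∂D
        = ∑ b : Fin m, ∫ z in Set.univ ×ˢ ({b} : Set (Fin m)),
            ∑ i, a z i * φ (h z.1) i ∂D := by
      rw [← setIntegral_univ, ← hunion,
        integral_iUnion hmeasS hdisj (hunion ▸ hFint.integrableOn), tsum_fintype]
    have step2 : ∀ b : Fin m, ∫ z in Set.univ ×ˢ ({b} : Set (Fin m)),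
        ∑ i, a z i * φ (h z.1) i ∂D = ∫ x, p x b * G b x ∂μ := by
      intro b
      rw [show (∫ z in Set.univ ×ˢ ({b} : Set (Fin m)), ∑ i, a z i * φ (h z.1) i ∂D)
          = ∫ z in Set.univ ×ˢ ({b} : Set (Fin m)), G b z.1 ∂D from
        setIntegral_congr_fun (hmeasS b) (by
          rintro ⟨x, y⟩ ⟨-, hy⟩
          simp only [Set.mem_singleton_iff] at hy
          subst hy
          exact hFform x y)]
      exact hfiber b (G b) (hGmeas b)
    have hint_pg : ∀ b : Fin m, Integrable (fun x => p x b * G b x) μ := by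
      intro b
      refine (integrable_const C).mono'
        ((hpmeas b).mul (hGmeas b)).aestronglyMeasurable (ae_of_all _ fun x => ?_)
      rw [Real.norm_eq_abs, abs_mul, abs_of_nonneg (hp0 x b)]
      calc p x b * |G b x| ≤ 1 * |G b x| :=
            mul_le_mul_of_nonneg_right (hp_le1 x b) (abs_nonneg _)
        _ = |G b x| := one_mul _
        _ ≤ C := hGbd b x
    have step3 : ∑ b : Fin m, ∫ x, p x b * G b x ∂μ
        = ∫ x, ∑ b, p x b * G b x ∂μ :=
      (integral_finset_sum Finset.univ fun b _ => hint_pg b).symm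
    have halg : ∀ x, ∑ b, p x b * G b x = ∑ i, ptil x i * φ (h x) i := by
      intro x
      have key : ∀ g1 g2 : Fin m → ℝ,
          (∑ y, if y = j x then g1 y else g2 y) = ∑ y, g2 y + (g1 (j x) - g2 (j x)) := by
        intro g1 g2
        have he : ∀ y, (if y = j x then g1 y else g2 y)
            = g2 y + (if y = j x then g1 y - g2 y else 0) := by
          intro y; by_cases hy : y = j x <;> simp [hy]
        rw [Finset.sum_congr rfl (fun y _ => he y), Finset.sum_add_distrib,
          Finset.sum_ite_eq' Finset.univ (j x) (fun y => g1 y - g2 y)]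
        simp
      have hL : ∑ b, p x b * G b x
          = ∑ y, (if y = j x
              then p x y * (α * (∑ i, p x i * φ (h x) i) + (1 - α) * φ (h x) y)
              else p x y * (ε * φ (h x) y)) := by
        refine Finset.sum_congr rfl fun y _ => ?_
        simp only [hGdef]
        by_cases hy : y = j x <;> simp [hy]
      have hR : ∑ i, ptil x i * φ (h x) i
          = ∑ y, (if y = j x
              then (α * p x y ^ 2 + (1 - α) * p x y) * φ (h x) y
              else ((α * p x (j x) + ε) * p x y) * φ (h x) y) := by
        refine Finset.sum_congr rfl fun y _ => ?_
        rw [hptil x y]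
        by_cases hy : y = j x <;> simp [hy]
      rw [hL, hR, key, key]
      have e1 : ∑ y, p x y * (ε * φ (h x) y) = ε * ∑ i, p x i * φ (h x) i := by
        rw [Finset.mul_sum]; exact Finset.sum_congr rfl fun y _ => by ring
      have e2 : ∑ y, ((α * p x (j x) + ε) * p x y) * φ (h x) y
          = (α * p x (j x) + ε) * ∑ i, p x i * φ (h x) i := by
        rw [Finset.mul_sum]; exact Finset.sum_congr rfl fun y _ => by ring
      rw [e1, e2]
      ring
    rw [step1, Finset.sum_congr rfl fun b _ => step2 b, step3]
    exact integral_congr_ae (ae_of_all _ fun x => halg x)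
  refine ⟨main, ?_⟩
  intro h hh hhm hint
  refine integral_mono hIntStar hint fun x => ?_
  set s : ℝ := ∑ k, ptil x k with hsdef
  set u : Fin m → ℝ := s⁻¹ • ptil x with hudef
  have hui : ∀ i, ptil x i = s * u i := by
    intro i
    simp only [hudef, Pi.smul_apply, smul_eq_mul]
    rw [← mul_assoc, mul_inv_cancel₀ (hsum_pos x).ne', one_mul]
  have base : ∑ i, u i * φ u i ≤ ∑ i, u i * φ (h x) i := by
    by_cases hvu : h x = u
    · rw [hvu]
    · exact (hproper u (hstar_mem x) (h x) (hh x) hvu).le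
  calc ∑ i, ptil x i * φ u i = s * ∑ i, u i * φ u i := by
        rw [Finset.mul_sum]
        exact Finset.sum_congr rfl fun i _ => by rw [hui i]; ring
    _ ≤ s * ∑ i, u i * φ (h x) i :=
        mul_le_mul_of_nonneg_left base (hsum_pos x).le
    _ = ∑ i, ptil x i * φ (h x) i := by
        rw [Finset.mul_sum]
        exact Finset.sum_congr rfl fun i _ => by rw [hui i]; ring
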